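/- A truncated weighted shift J_λ on ℂ^k with weights λ = (λ₁, …, λ_{k−1}) satisfying |λᵢ| = |λ_{k−i}| for all i = 1, …, k−1 is complex symmetric, i.e., there exists a conjugation C on ℂ^k with J_λ = C J_λ* C. -/

import Mathlib

open InnerProductSpace in
/-- A conjugation on a complex inner product space: an antilinear involution
satisfying `⟪Cf, Cg⟫ = ⟪g, f⟫`. -/
structure Conjugation (H : Type*) [NormedAddCommGroup H] [InnerProductSpace ℂ H] where
  toFun : H → H
  map_add' : ∀ x y, toFun (x + y) = toFun x + toFun y
  map_smul' : ∀ (c : ℂ) (x : H), toFun (c • x) = (starRingEnd ℂ c) • toFun x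
  invol : ∀ x, toFun (toFun x) = x
  inner_map : ∀ x y, (inner ℂ (toFun x) (toFun y) : ℂ) = inner ℂ y x

/-- `T` is `C`-symmetric: `T ⊆ C T* C`. -/
noncomputable def CSymmetric {H : Type*} [NormedAddCommGroup H] [InnerProductSpace ℂ H]
    [CompleteSpace H] (C : Conjugation H) (T : H →ₗ.[ℂ] H) : Prop :=
  ∀ x : T.domain, ∃ hx : C.toFun x ∈ T.adjoint.domain,
    C.toFun (T.adjoint ⟨C.toFun x, hx⟩) = T x

/-- `T` is `C`-selfadjoint: `T = C T* C`. -/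
noncomputable def CSelfAdjoint {H : Type*} [NormedAddCommGroup H] [InnerProductSpace ℂ H]
    [CompleteSpace H] (C : Conjugation H) (T : H →ₗ.[ℂ] H) : Prop :=
  CSymmetric C T ∧ ∀ y : H, C.toFun y ∈ T.adjoint.domain → y ∈ T.domain

/-- Composition of partially defined linear maps, with its natural (maximal) domain. -/
noncomputable def LinearPMap.pcomp {R E F G : Type*} [Ring R] [AddCommGroup E] [Module R E]
    [AddCommGroup F] [Module R F] [AddCommGroup G] [Module R G]
    (g : F →ₗ.[R] G) (f : E →ₗ.[R] F) : E →ₗ.[R] G :=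
  g.comp (f.domRestrict ((g.domain.comap f.toFun).map f.domain.subtype))
    (by
      rintro ⟨x, hx⟩
      obtain ⟨y, hy, hyx⟩ := (Submodule.mem_inf.mp hx).1
      erw [LinearPMap.domRestrict_apply (y := y) (by exact hyx.symm)]
      exact hy)

/-- Natural powers of a partially defined linear map, `T^(n+1) = T ∘ T^n`, with
`T^0` the identity on the whole space. -/
noncomputable def LinearPMap.ppow {R E : Type*} [Ring R] [AddCommGroup E] [Module R E]
    (T : E →ₗ.[R] E) : ℕ → E →ₗ.[R] E
  | 0 => ⟨⊤, (⊤ : Submodule R E).subtype⟩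
  | n + 1 => T.pcomp (T.ppow n)

noncomputable def gam (k : ℕ) (μ : ℕ → ℂ) (t : ℕ) : ℂ :=
  if μ (k - 2 - t) = 0 then 1 else μ t / μ (k - 2 - t)

noncomputable def alp (k : ℕ) (μ : ℕ → ℂ) (i : ℕ) : ℂ :=
  ∏ t ∈ Finset.range (min i (k - 1 - i)), gam k μ t

section aux
variable {k : ℕ} {μ : ℕ → ℂ}

lemma gam_norm (hμ : ∀ i : ℕ, i + 1 < k → ‖μ i‖ = ‖μ (k - 2 - i)‖)
    {t : ℕ} (ht : t + 1 < k) : ‖gam k μ t‖ = 1 := by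
  unfold gam
  split_ifs with h
  · simp
  · rw [norm_div, hμ t ht, div_self (norm_ne_zero_iff.mpr h)]

lemma gam_pair (hμ : ∀ i : ℕ, i + 1 < k → ‖μ i‖ = ‖μ (k - 2 - i)‖)
    {t : ℕ} (ht : t + 1 < k) : gam k μ t * gam k μ (k - 2 - t) = 1 := by
  have hsub : k - 2 - (k - 2 - t) = t := by omega
  unfold gam
  rw [hsub]
  by_cases h : μ (k - 2 - t) = 0
  · have h0 : μ t = 0 := by
      have := hμ t ht; rw [h, norm_zero] at this; simpa using this
    simp [h, h0]
  · have h0 : μ t ≠ 0 := by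
      intro h1
      have := hμ t ht
      rw [h1, norm_zero] at this
      exact h (by simpa using this.symm)
    rw [if_neg h, if_neg h0]
    field_simp

lemma gam_self {t : ℕ} (ht : k - 2 - t = t) : gam k μ t = 1 := by
  unfold gam
  rw [ht]
  by_cases h : μ t = 0
  · simp [h]
  · rw [if_neg h, div_self h]

lemma alp_norm (hμ : ∀ i : ℕ, i + 1 < k → ‖μ i‖ = ‖μ (k - 2 - i)‖)
    (i : ℕ) : ‖alp k μ i‖ = 1 := by
  unfold alp
  rw [norm_prod]
  apply Finset.prod_eq_one
  intro t htm
  have ht : t + 1 < k := by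
    have := Finset.mem_range.mp htm
    omega
  exact gam_norm hμ ht

lemma alp_mul_conj (hμ : ∀ i : ℕ, i + 1 < k → ‖μ i‖ = ‖μ (k - 2 - i)‖)
    (i : ℕ) : alp k μ i * (starRingEnd ℂ) (alp k μ i) = 1 := by
  rw [Complex.mul_conj]
  norm_cast
  rw [Complex.normSq_eq_norm_sq, alp_norm hμ]
  norm_num

lemma alp_sym {i : ℕ} (hi : i ≤ k - 1) : alp k μ (k - 1 - i) = alp k μ i := by
  unfold alp
  congr 1
  have : k - 1 - (k - 1 - i) = i := by omega
  rw [this, min_comm]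

lemma alp_rec (hμ : ∀ i : ℕ, i + 1 < k → ‖μ i‖ = ‖μ (k - 2 - i)‖)
    {j : ℕ} (hj : j + 1 < k) : alp k μ (j + 1) = gam k μ j * alp k μ j := by
  unfold alp
  rcases lt_trichotomy (2 * j + 2) k with h | h | h
  · have h1 : min (j + 1) (k - 1 - (j + 1)) = j + 1 := by omega
    have h2 : min j (k - 1 - j) = j := by omega
    rw [h1, h2, Finset.prod_range_succ, mul_comm]
  · have h1 : min (j + 1) (k - 1 - (j + 1)) = j := by omega
    have h2 : min j (k - 1 - j) = j := by omega
    rw [h1, h2, gam_self (by omega : k - 2 - j = j), one_mul]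
  · have h1 : min (j + 1) (k - 1 - (j + 1)) = k - 2 - j := by omega
    have h2 : min j (k - 1 - j) = (k - 2 - j) + 1 := by omega
    rw [h1, h2, Finset.prod_range_succ]
    have hp := gam_pair hμ hj
    calc ∏ t ∈ Finset.range (k - 2 - j), gam k μ t
        = (gam k μ j * gam k μ (k - 2 - j)) *
            ∏ t ∈ Finset.range (k - 2 - j), gam k μ t := by rw [hp, one_mul]
      _ = gam k μ j * ((∏ t ∈ Finset.range (k - 2 - j), gam k μ t) * gam k μ (k - 2 - j)) := by
            ring

lemma gam_mul_key (hμ : ∀ i : ℕ, i + 1 < k → ‖μ i‖ = ‖μ (k - 2 - i)‖)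
    {j : ℕ} (hj : j + 1 < k) : gam k μ j * μ (k - 2 - j) = μ j := by
  unfold gam
  by_cases h : μ (k - 2 - j) = 0
  · have h0 : μ j = 0 := by
      have := hμ j hj; rw [h, norm_zero] at this; simpa using this
    simp [h, h0]
  · rw [if_neg h, div_mul_cancel₀ _ h]

lemma alp_key (hμ : ∀ i : ℕ, i + 1 < k → ‖μ i‖ = ‖μ (k - 2 - i)‖)
    {j : ℕ} (hj : j + 1 < k) :
    alp k μ (j + 1) * (starRingEnd ℂ) (alp k μ (k - 1 - j)) * μ (k - 2 - j) = μ j := by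
  rw [alp_sym (by omega : j ≤ k - 1), alp_rec hμ hj]
  calc gam k μ j * alp k μ j * (starRingEnd ℂ) (alp k μ j) * μ (k - 2 - j)
      = gam k μ j * (alp k μ j * (starRingEnd ℂ) (alp k μ j)) * μ (k - 2 - j) := by ring
    _ = gam k μ j * μ (k - 2 - j) := by rw [alp_mul_conj hμ]; ring
    _ = μ j := gam_mul_key hμ hj

end aux

/-- a truncated weighted shift `J` on `ℂ^k` (with `0`-indexed weights
`μ 0, …, μ (k-2)`, so that `J eᵢ = μ i • e_{i+1}` and `J e_{k-1} = 0`) whose weights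
satisfy `|μ i| = |μ (k-2-i)|` is complex symmetric: `J = C J* C` for some conjugation. -/
theorem stmt_7 (k : ℕ) (hk : 1 ≤ k) (μ : ℕ → ℂ)
    (J : EuclideanSpace ℂ (Fin k) →L[ℂ] EuclideanSpace ℂ (Fin k))
    (hJ : ∀ i : Fin k, J (EuclideanSpace.single i 1) =
      if h : (i : ℕ) + 1 < k then μ i • EuclideanSpace.single (⟨(i : ℕ) + 1, h⟩ : Fin k) 1
      else 0)
    (hμ : ∀ i : ℕ, i + 1 < k → ‖μ i‖ = ‖μ (k - 2 - i)‖) :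
    ∃ C : Conjugation (EuclideanSpace ℂ (Fin k)),
      ∀ x, J x = C.toFun (ContinuousLinearMap.adjoint J (C.toFun x)) := by
  classical
  set Cf : EuclideanSpace ℂ (Fin k) → EuclideanSpace ℂ (Fin k) :=
    fun f => WithLp.toLp 2 (fun i : Fin k => alp k μ i * (starRingEnd ℂ) (f i.rev)) with hCf
  have hCf_apply : ∀ (f : EuclideanSpace ℂ (Fin k)) (i : Fin k),
      Cf f i = alp k μ i * (starRingEnd ℂ) (f i.rev) := fun f i => rfl
  have hrev : ∀ i : Fin k, (i.rev : ℕ) = k - 1 - (i : ℕ) := by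
    intro i; rw [Fin.val_rev]; omega
  have halpr : ∀ i : Fin k, alp k μ (i.rev : ℕ) = alp k μ (i : ℕ) := by
    intro i
    rw [hrev]
    exact alp_sym (by omega)
  have hAdj : ∀ (y : EuclideanSpace ℂ (Fin k)) (j : Fin k),
      (ContinuousLinearMap.adjoint J y) j =
        if h : (j : ℕ) + 1 < k then (starRingEnd ℂ) (μ j) * y ⟨(j : ℕ) + 1, h⟩ else 0 := by
    intro y j
    have h1 : (ContinuousLinearMap.adjoint J y) j =
        inner ℂ (EuclideanSpace.single j (1 : ℂ)) (ContinuousLinearMap.adjoint J y) := by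
      rw [EuclideanSpace.inner_single_left]; simp
    rw [h1, ContinuousLinearMap.adjoint_inner_right, hJ j]
    split_ifs with h
    · rw [inner_smul_left, EuclideanSpace.inner_single_left]; simp
    · simp
  have hJx : ∀ (x : EuclideanSpace ℂ (Fin k)) (i : Fin k),
      J x i = if h : 0 < (i : ℕ) then μ ((i : ℕ) - 1) * x ⟨(i : ℕ) - 1, by omega⟩ else 0 := by
    intro x i
    have hx : x = ∑ j : Fin k, x j • EuclideanSpace.single j (1 : ℂ) := by
      have := (EuclideanSpace.basisFun (Fin k) ℂ).sum_repr x
      simpa [EuclideanSpace.basisFun_apply] using this.symm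
    have h1 : J x i = inner ℂ (EuclideanSpace.single i (1 : ℂ)) (J x) := by
      rw [EuclideanSpace.inner_single_left]; simp
    rw [h1]
    conv_lhs => rw [hx]
    rw [map_sum, inner_sum]
    have hterm : ∀ j : Fin k,
        inner ℂ (EuclideanSpace.single i (1 : ℂ)) (J (x j • EuclideanSpace.single j 1)) =
          x j * (if h : (j : ℕ) + 1 < k then
            (if (i : ℕ) = (j : ℕ) + 1 then μ j else 0) else 0) := by
      intro j
      rw [map_smul, inner_smul_right, hJ j]
      split_ifs with h h2
      · rw [inner_smul_right, EuclideanSpace.inner_single_left, EuclideanSpace.single_apply,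
          if_pos (Fin.ext h2 : i = (⟨(j : ℕ) + 1, h⟩ : Fin k))]
        simp
      · rw [inner_smul_right, EuclideanSpace.inner_single_left, EuclideanSpace.single_apply,
          if_neg (fun hh : i = (⟨(j : ℕ) + 1, h⟩ : Fin k) => h2 (by rw [hh]))]
        simp
      · simp
    rw [Finset.sum_congr rfl (fun j _ => hterm j)]
    split_ifs with h
    · rw [Finset.sum_eq_single (⟨(i : ℕ) - 1, by omega⟩ : Fin k)]
      · rw [dif_pos (show (i : ℕ) - 1 + 1 < k by omega)]
        rw [if_pos (show (i : ℕ) = (i : ℕ) - 1 + 1 by omega)]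
        ring
      · intro j _ hj
        split_ifs with h1 h2
        · exfalso; exact hj (Fin.ext (show (j : ℕ) = (i : ℕ) - 1 by omega))
        · simp
        · simp
      · intro hmem; exact absurd (Finset.mem_univ _) hmem
    · apply Finset.sum_eq_zero
      intro j _
      split_ifs with h1 h2
      · omega
      · simp
      · simp
  refine ⟨⟨Cf, ?_, ?_, ?_, ?_⟩, ?_⟩
  · -- map_add
    intro f g
    ext i
    simp only [hCf_apply, PiLp.add_apply, map_add]
    ring
  · -- map_smul
    intro c f
    ext i
    simp only [hCf_apply, PiLp.smul_apply, smul_eq_mul, map_mul]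
    ring
  · -- invol
    intro f
    ext i
    simp only [hCf_apply, map_mul, Complex.conj_conj]
    rw [Fin.rev_rev, halpr]
    calc alp k μ (i : ℕ) * ((starRingEnd ℂ) (alp k μ (i : ℕ)) * f i)
        = (alp k μ (i : ℕ) * (starRingEnd ℂ) (alp k μ (i : ℕ))) * f i := by ring
      _ = f i := by rw [alp_mul_conj hμ]; ring
  · -- inner_map
    intro f g
    rw [PiLp.inner_apply, PiLp.inner_apply]
    have hterm : ∀ i : Fin k,
        (inner ℂ (Cf f i) (Cf g i) : ℂ) = (fun j : Fin k => f j * (starRingEnd ℂ) (g j)) i.rev := by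
      intro i
      rw [RCLike.inner_apply, hCf_apply, hCf_apply]
      simp only [map_mul, Complex.conj_conj]
      rw [mul_comm]
      calc (starRingEnd ℂ) (alp k μ (i : ℕ)) * f i.rev * (alp k μ (i : ℕ) * (starRingEnd ℂ) (g i.rev))
          = (alp k μ (i : ℕ) * (starRingEnd ℂ) (alp k μ (i : ℕ))) * (f i.rev * (starRingEnd ℂ) (g i.rev)) := by ring
        _ = f i.rev * (starRingEnd ℂ) (g i.rev) := by rw [alp_mul_conj hμ]; ring
    rw [Fintype.sum_bijective Fin.rev Fin.rev_bijective _ (fun j : Fin k => f j * (starRingEnd ℂ) (g j)) hterm]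
    apply Finset.sum_congr rfl
    intro j _
    rw [RCLike.inner_apply]
  · -- main identity
    intro x
    show J x = Cf (ContinuousLinearMap.adjoint J (Cf x))
    ext i
    rw [hJx, hCf_apply, hAdj]
    by_cases hi : 0 < (i : ℕ)
    · have hc : (i.rev : ℕ) + 1 < k := by rw [hrev]; omega
      rw [dif_pos hi, dif_pos hc]
      have hb : (⟨(i.rev : ℕ) + 1, hc⟩ : Fin k).rev = (⟨(i : ℕ) - 1, by omega⟩ : Fin k) := by
        apply Fin.ext
        rw [hrev]
        simp only [hrev i]
        omega
      rw [hCf_apply x ⟨(i.rev : ℕ) + 1, hc⟩, hb]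
      have hkey := alp_key hμ (show (i : ℕ) - 1 + 1 < k by omega)
      have e1 : (i : ℕ) - 1 + 1 = (i : ℕ) := by omega
      have e2 : k - 1 - ((i : ℕ) - 1) = k - (i : ℕ) := by omega
      have e3 : k - 2 - ((i : ℕ) - 1) = k - 1 - (i : ℕ) := by omega
      rw [e1, e2, e3] at hkey
      have ha : ((⟨(i.rev : ℕ) + 1, hc⟩ : Fin k) : ℕ) = k - (i : ℕ) := by
        show (i.rev : ℕ) + 1 = k - (i : ℕ)
        rw [hrev]; omega
      have hmu : μ (i.rev : ℕ) = μ (k - 1 - (i : ℕ)) := by rw [hrev]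
      rw [ha, hmu]
      simp only [map_mul, Complex.conj_conj]
      rw [← hkey]
      ring
    · have hc : ¬ ((i.rev : ℕ) + 1 < k) := by rw [hrev]; omega
      rw [dif_neg hi, dif_neg hc]
      simp
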